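/- Let f : ℝⁿ × ℝᵖ → ℝⁿ be continuously differentiable, and define the reachable workspace W = { α ∈ ℝᵖ | ∃ χ ∈ ℝⁿ, f(χ, α) = 0 }. If α ∈ W lies on the topological frontier of W, then for every χ ∈ ℝⁿ with f(χ, α) = 0 there exists ζ ∈ ℝⁿ with ‖ζ‖ = 1 and D_χ f(χ, α)ᵀ·ζ = 0; that is, every point of ∂W ∩ W corresponds to a singular configuration of the mechanism satisfying the extended system f(χ,α) = 0, f_χᵀ(χ,α)·ζ = 0, ζᵀζ = 1. -/

import Mathlib

open Matrix

/-- Workspace boundaries are singular configurations: if `α` belongs to the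
reachable workspace `W = {α | ∃ χ, f(χ, α) = 0}` and lies on its topological
frontier, then for every `χ` with `f(χ, α) = 0` there is a unit vector `ζ`
(`ζᵀ ζ = 1`) in the kernel of the transposed partial Jacobian:
`D_χ f(χ, α)ᵀ ζ = 0`, i.e. `(χ, α, ζ)` solves the extended system
`f(χ,α) = 0`, `f_χᵀ ζ = 0`, `ζᵀ ζ = 1`. -/
theorem frontier_workspace_is_singular
    (n p : ℕ) (f : (Fin n → ℝ) × (Fin p → ℝ) → Fin n → ℝ)
    (hf : ContDiff ℝ 1 f)
    (W : Set (Fin p → ℝ))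
    (hW : W = {α : Fin p → ℝ | ∃ χ : Fin n → ℝ, f (χ, α) = 0})
    (α : Fin p → ℝ) (hα : α ∈ W) (hfr : α ∈ frontier W) :
    ∀ χ : Fin n → ℝ, f (χ, α) = 0 →
      ∃ ζ : Fin n → ℝ, ζ ⬝ᵥ ζ = 1 ∧
        (LinearMap.toMatrix'
            ((fderiv ℝ (fun x => f (x, α)) χ).toLinearMap))ᵀ.mulVec ζ = 0 := by
  intro χ hχ
  by_contra h
  push_neg at h
  set J := fderiv ℝ (fun x => f (x, α)) χ with hJdef
  set M := LinearMap.toMatrix' J.toLinearMap with hMdef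
  -- Step A: the transpose has trivial kernel
  have hker : ∀ ζ : Fin n → ℝ, Mᵀ.mulVec ζ = 0 → ζ = 0 := by
    intro ζ hζ
    by_contra hζ0
    have hpos : 0 < ζ ⬝ᵥ ζ := by
      have hex : ∃ i, ζ i ≠ 0 := by
        by_contra hc; push_neg at hc; exact hζ0 (funext hc)
      obtain ⟨i, hi⟩ := hex
      have : (0:ℝ) < ζ i * ζ i := mul_self_pos.mpr hi
      exact Finset.sum_pos' (fun j _ => mul_self_nonneg (ζ j))
        ⟨i, Finset.mem_univ i, this⟩
    set c : ℝ := Real.sqrt (ζ ⬝ᵥ ζ) with hc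
    have hcpos : 0 < c := Real.sqrt_pos.mpr hpos
    refine h (c⁻¹ • ζ) ?_ ?_
    · have : (c⁻¹ • ζ) ⬝ᵥ (c⁻¹ • ζ) = c⁻¹ * (c⁻¹ * (ζ ⬝ᵥ ζ)) := by
        rw [smul_dotProduct, dotProduct_smul]; simp [smul_eq_mul]
      rw [this]
      have : c * c = ζ ⬝ᵥ ζ := Real.mul_self_sqrt hpos.le
      field_simp
      nlinarith
    · rw [Matrix.mulVec_smul, hζ, smul_zero]
  -- Step B: det M ≠ 0, hence J is bijective
  have hdetT : Mᵀ.det ≠ 0 := by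
    intro hd
    obtain ⟨v, hv0, hv⟩ := (Matrix.exists_mulVec_eq_zero_iff).mpr hd
    exact hv0 (hker v hv)
  have hdet : M.det ≠ 0 := by rwa [Matrix.det_transpose] at hdetT
  have hJlin : (Matrix.toLin' M) = J.toLinearMap := Matrix.toLin'_toMatrix' _
  have hJinj : Function.Injective J := by
    intro x y hxy
    have hz : J (x - y) = 0 := by rw [map_sub, hxy, sub_self]
    have : M.mulVec (x - y) = 0 := by
      have := congrArg (fun g => g (x - y)) hJlin
      simp only [Matrix.toLin'_apply] at this
      rw [this]; exact hz
    by_contra hne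
    exact hdet ((Matrix.exists_mulVec_eq_zero_iff).mp ⟨x - y, sub_ne_zero.mpr hne, this⟩)
  have hJsurj : Function.Surjective J :=
    LinearMap.injective_iff_surjective.mp hJinj
  -- Step C: relate J to the full derivative D
  have hdf : Differentiable ℝ f := hf.differentiable one_ne_zero
  set D := fderiv ℝ f (χ, α) with hDdef
  have hD : HasFDerivAt f D (χ, α) := (hdf (χ, α)).hasFDerivAt
  have hcomp : HasFDerivAt (fun x => f (x, α))
      (D.comp (ContinuousLinearMap.inl ℝ (Fin n → ℝ) (Fin p → ℝ))) χ :=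
    hD.comp χ (hasFDerivAt_prodMk_left χ α)
  have hJD : J = D.comp (ContinuousLinearMap.inl ℝ (Fin n → ℝ) (Fin p → ℝ)) := by
    rw [hJdef]; exact hcomp.fderiv
  -- Step D: the extended map F(x,a) = (f(x,a), a) has invertible strict derivative
  set F : ((Fin n → ℝ) × (Fin p → ℝ)) → ((Fin n → ℝ) × (Fin p → ℝ)) :=
    fun z => (f z, z.2) with hFdef
  set L : ((Fin n → ℝ) × (Fin p → ℝ)) →L[ℝ] ((Fin n → ℝ) × (Fin p → ℝ)) :=
    D.prod (ContinuousLinearMap.snd ℝ (Fin n → ℝ) (Fin p → ℝ)) with hLdef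
  have hLbij : Function.Bijective L := by
    constructor
    · intro z w hzw
      have h2 : z.2 = w.2 := by
        have := congrArg Prod.snd hzw
        simpa [hLdef] using this
      have h1 : D z = D w := by
        have := congrArg Prod.fst hzw
        simpa [hLdef] using this
      have hz1 : z = (z.1, z.2) := rfl
      have : D (z.1 - w.1, 0) = 0 := by
        have : D (z - w) = 0 := by rw [map_sub, h1, sub_self]
        have he : z - w = (z.1 - w.1, (0 : Fin p → ℝ)) := by
          ext <;> simp [Prod.sub_def, h2]
        rwa [he] at this
      have hJz : J (z.1 - w.1) = 0 := by
        rw [hJD]; simpa using this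
      have h1' : z.1 = w.1 := by
        have := hJinj (a₁ := z.1 - w.1) (a₂ := 0) (by simpa using hJz)
        exact sub_eq_zero.mp this
      exact Prod.ext h1' h2
    · rintro ⟨y, a⟩
      obtain ⟨x, hx⟩ := hJsurj (y - D (0, a))
      refine ⟨(x, a), ?_⟩
      have hsplit : D (x, a) = D (x, 0) + D (0, a) := by
        rw [← map_add]; congr 1; ext <;> simp
      have hJx : D (x, 0) = J x := by rw [hJD]; simp
      have : D (x, a) = y := by rw [hsplit, hJx, hx]; abel
      simp [hLdef, this]
  -- build the continuous linear equivalence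
  let e : ((Fin n → ℝ) × (Fin p → ℝ)) ≃L[ℝ] ((Fin n → ℝ) × (Fin p → ℝ)) :=
    (LinearEquiv.ofBijective L.toLinearMap hLbij).toContinuousLinearEquiv
  have hFs : HasStrictFDerivAt F (e : ((Fin n → ℝ) × (Fin p → ℝ)) →L[ℝ]
      ((Fin n → ℝ) × (Fin p → ℝ))) (χ, α) := by
    have hfs : HasStrictFDerivAt f D (χ, α) :=
      (hf.contDiffAt).hasStrictFDerivAt one_ne_zero
    have hFsL : HasStrictFDerivAt F L (χ, α) :=
      HasStrictFDerivAt.prodMk hfs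
        ((ContinuousLinearMap.snd ℝ (Fin n → ℝ) (Fin p → ℝ)).hasStrictFDerivAt)
    have : (e : ((Fin n → ℝ) × (Fin p → ℝ)) →L[ℝ] ((Fin n → ℝ) × (Fin p → ℝ))) = L := by
      ext z <;> rfl
    rwa [this]
  have hmap : Filter.map F (nhds (χ, α)) = nhds (F (χ, α)) :=
    hFs.map_nhds_eq_of_equiv
  have hFval : F (χ, α) = (0, α) := by simp [hFdef, hχ]
  -- range F is a neighborhood of (0, α)
  have hrange : Set.range F ∈ nhds ((0 : Fin n → ℝ), α) := by
    rw [← hFval, ← hmap]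
    exact Filter.mem_map.mpr (Filter.univ_mem' fun z => Set.mem_range_self z)
  -- pull back along a ↦ (0, a)
  have hcont : Continuous (fun a : Fin p → ℝ => ((0 : Fin n → ℝ), a)) :=
    (continuous_const.prodMk continuous_id)
  have hWnhds : W ∈ nhds α := by
    have hpre : (fun a : Fin p → ℝ => ((0 : Fin n → ℝ), a)) ⁻¹' (Set.range F) ∈ nhds α :=
      hcont.continuousAt.preimage_mem_nhds hrange
    refine Filter.mem_of_superset hpre ?_
    intro a ha
    obtain ⟨z, hz⟩ := ha
    have hz1 : f z = 0 := congrArg Prod.fst hz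
    have hz2 : z.2 = a := congrArg Prod.snd hz
    rw [hW]
    exact ⟨z.1, by rw [← hz2]; simpa using hz1⟩
  exact hfr.2 (mem_interior_iff_mem_nhds.mpr hWnhds)
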